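/- Fix 0 < r < ∞ and 0 < δ < 1, and for R > r define φ^{(r,R)} : ℝ → ℝ by φ^{(r,R)}(x) = 1 for |x| ≤ r, φ^{(r,R)}(x) = 1 - log(1+|x|-r)/log(1+R-r) for r < |x| < R, and φ^{(r,R)}(x) = 0 for |x| ≥ R. Let J_{R,2} denote the integral of [(φ^{(r,R)}(x) - φ^{(r,R)}(y))/(x-y)]² · [1 + (log(1+|x-y|))^δ] over the domain D_2(r,R) = {(x,y) ∈ ℝ² : |x| < r < |y| < R}. Then J_{R,2} ≤ (4r·[1 + (log(1+R+r))^δ]/(log(1+R-r))²) · ∫_0^∞ (log(1+t)/t)² dt; in particular there exist constants C > 0 and R_0 > r such that J_{R,2} ≤ C/(log R)^{2-δ} for all R ≥ R_0, so J_{R,2} → 0 as R → ∞. -/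

import Mathlib

open MeasureTheory

/-- The cutoff function `φ^{(r,R)}` of the paper: `1` on `[-r,r]`,
`1 - log(1+|x|-r)/log(1+R-r)` for `r < |x| < R`, and `0` for `|x| ≥ R`. -/
noncomputable def phiCut (r R x : ℝ) : ℝ :=
  if |x| ≤ r then 1
  else if |x| < R then 1 - Real.log (1 + |x| - r) / Real.log (1 + R - r)
  else 0

/-- The variance-type integral
`∫∫_D [(φ^{(r,R)}(x)-φ^{(r,R)}(y))/(x-y)]² [1 + log^δ(1+|x-y|)] dx dy`
over a domain `D ⊆ ℝ²` (the integrand vanishes on the diagonal, since `0/0 = 0`). -/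
noncomputable def Jint (r R δ : ℝ) (D : Set (ℝ × ℝ)) : ENNReal :=
  ∫⁻ p in D, ENNReal.ofReal
    (((phiCut r R p.1 - phiCut r R p.2) / (p.1 - p.2)) ^ 2 *
      (1 + Real.log (1 + |p.1 - p.2|) ^ δ))

/-- For fixed `0 < r` and `δ ∈ (0,1)`, the integral `J_{R,2}` of
`[(φ^{(r,R)}(x)-φ^{(r,R)}(y))/(x-y)]² [1 + log^δ(1+|x-y|)]` over
`D₂(r,R) = {|x| < r < |y| < R}` satisfies
`J_{R,2} ≤ (4r[1 + log^δ(1+R+r)]/log²(1+R-r)) ∫₀^∞ (log(1+t)/t)² dt` for `R > r`;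
in particular `J_{R,2} ≤ C/(log R)^{2-δ}` for some `C > 0` and all `R ≥ R₀ > r`,
so `J_{R,2} → 0` as `R → ∞`. -/

noncomputable def Gfun (t : ℝ) : ℝ := (Real.log (1 + t) / t) ^ 2

lemma Gfun_meas : Measurable Gfun :=
  ((Real.measurable_log.comp (measurable_id.const_add 1)).div measurable_id).pow_const 2

lemma Gfun_nonneg (t : ℝ) : 0 ≤ Gfun t := sq_nonneg _

lemma Gfun_integrable : IntegrableOn Gfun (Set.Ioi 0) := by
  have h1 : IntegrableOn Gfun (Set.Ioc 0 1) := by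
    apply Integrable.mono' (integrable_const (1:ℝ)) (Gfun_meas.aestronglyMeasurable)
    rw [ae_restrict_iff' measurableSet_Ioc]
    filter_upwards with t ht
    obtain ⟨ht0, ht1⟩ := ht
    have hlog : Real.log (1 + t) ≤ t := by
      have := Real.log_le_sub_one_of_pos (x := 1 + t) (by linarith)
      linarith
    have hlog0 : 0 ≤ Real.log (1 + t) := Real.log_nonneg (by linarith)
    rw [Real.norm_eq_abs, abs_of_nonneg (Gfun_nonneg t)]
    have : Real.log (1 + t) / t ≤ 1 := by
      rw [div_le_one ht0]; linarith
    exact pow_le_one₀ (div_nonneg hlog0 ht0.le) this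
  have h2 : IntegrableOn Gfun (Set.Ioi 1) := by
    apply Integrable.mono' ((integrableOn_Ioi_rpow_of_lt (by norm_num : (-3/2:ℝ) < -1)
      one_pos).const_mul 64) (Gfun_meas.aestronglyMeasurable)
    rw [ae_restrict_iff' measurableSet_Ioi]
    filter_upwards with t ht
    have ht0 : (0:ℝ) < t := lt_trans one_pos ht
    have hlog : Real.log (1 + t) ≤ 8 * t ^ (1/4 : ℝ) := by
      have h1 : Real.log (1 + t) ≤ (1 + t) ^ (1/4 : ℝ) / (1/4) :=
        Real.log_le_rpow_div (by linarith) (by norm_num)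
      have ht1 : (1:ℝ) < t := ht
      have h2 : (1 + t) ^ (1/4 : ℝ) ≤ (2 * t) ^ (1/4 : ℝ) :=
        Real.rpow_le_rpow (by linarith) (by linarith) (by norm_num)
      have h3 : (2 * t) ^ (1/4 : ℝ) = 2 ^ (1/4:ℝ) * t ^ (1/4:ℝ) :=
        Real.mul_rpow (by norm_num) ht0.le
      have h4 : (2:ℝ) ^ (1/4:ℝ) ≤ 2 := by
        calc (2:ℝ) ^ (1/4:ℝ) ≤ 2 ^ (1:ℝ) :=
          Real.rpow_le_rpow_of_exponent_le one_le_two (by norm_num)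
        _ = 2 := Real.rpow_one 2
      have ht14 : 0 ≤ t ^ (1/4:ℝ) := Real.rpow_nonneg ht0.le _
      nlinarith
    have hlog0 : 0 ≤ Real.log (1 + t) := Real.log_nonneg (by linarith)
    rw [Real.norm_eq_abs, abs_of_nonneg (Gfun_nonneg t)]
    have hsq : (t ^ (1/4:ℝ)) ^ 2 = t ^ (1/2:ℝ) := by
      rw [← Real.rpow_natCast (t ^ (1/4:ℝ)) 2, ← Real.rpow_mul ht0.le]
      norm_num
    have key : Gfun t ≤ 64 * t ^ (1/2:ℝ) / t ^ 2 := by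
      unfold Gfun
      rw [div_pow]
      apply div_le_div_of_nonneg_right ?_ (by positivity)
      · nlinarith [Real.rpow_nonneg ht0.le (1/4:ℝ)]
    have heq : 64 * t ^ (1/2:ℝ) / t ^ 2 = 64 * t ^ (-3/2:ℝ) := by
      rw [show (-3/2:ℝ) = 1/2 - (2:ℕ) by push_cast; ring, Real.rpow_sub ht0,
        Real.rpow_natCast]
      ring
    rw [← heq]; exact key
  have := h1.union h2
  rwa [Set.Ioc_union_Ioi_eq_Ioi (le_of_lt one_pos)] at this

lemma lintegral_Gfun :
    ∫⁻ t in Set.Ioi (0:ℝ), ENNReal.ofReal (Gfun t) =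
      ENNReal.ofReal (∫ t in Set.Ioi (0:ℝ), Gfun t) :=
  (ofReal_integral_eq_lintegral_ofReal Gfun_integrable
    (Filter.Eventually.of_forall fun t => Gfun_nonneg t)).symm

lemma lint_shift (f : ℝ → ENNReal) (a b c : ℝ) :
    ∫⁻ x in Set.Ioo a b, f (x - c) = ∫⁻ x in Set.Ioo (a - c) (b - c), f x := by
  rw [← lintegral_indicator measurableSet_Ioo, ← lintegral_indicator measurableSet_Ioo]
  rw [← lintegral_add_right_eq_self (fun x => (Set.Ioo (a-c) (b-c)).indicator f x) (-c)]
  congr 1; ext x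
  simp only [Set.indicator_apply, Set.mem_Ioo]
  rw [show x + -c = x - c by ring]
  have h1 : (a - c < x - c ∧ x - c < b - c) ↔ (a < x ∧ x < b) := by constructor <;> intro h <;> constructor <;> linarith [h.1, h.2]
  by_cases h : a < x ∧ x < b
  · rw [if_pos h, if_pos ((h1.2 h) : _)]
  · rw [if_neg h, if_neg (fun hh => h (h1.1 hh))]

lemma lint_reflect (f : ℝ → ENNReal) (hf : Measurable f) (a b : ℝ) :
    ∫⁻ x in Set.Ioo a b, f (-x) = ∫⁻ x in Set.Ioo (-b) (-a), f x := by
  rw [← lintegral_indicator measurableSet_Ioo, ← lintegral_indicator measurableSet_Ioo]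
  have hneg : ∫⁻ x : ℝ, (Set.Ioo (-b) (-a)).indicator f (-x) =
      ∫⁻ x : ℝ, (Set.Ioo (-b) (-a)).indicator f x := by
    have := lintegral_map (μ := (volume : Measure ℝ))
      (f := (Set.Ioo (-b) (-a)).indicator f) (g := Neg.neg)
      (hf.indicator measurableSet_Ioo) measurable_neg
    rw [Measure.map_neg_eq_self] at this
    exact this.symm
  rw [← hneg]
  congr 1; ext x
  simp only [Set.indicator_apply, Set.mem_Ioo]
  have h1 : (-b < -x ∧ -x < -a) ↔ (a < x ∧ x < b) := by
    constructor <;> intro h <;> constructor <;> linarith [h.1, h.2]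
  by_cases h : a < x ∧ x < b
  · rw [if_pos h, if_pos (h1.2 h)]
  · rw [if_neg h, if_neg (fun hh => h (h1.1 hh))]

lemma main_bound (r δ : ℝ) (hr : 0 < r) (hδ0 : 0 < δ) (R : ℝ) (hR : r < R) :
    Jint r R δ {p : ℝ × ℝ | |p.1| < r ∧ r < |p.2| ∧ |p.2| < R} ≤
      ENNReal.ofReal
        (4 * r * (1 + Real.log (1 + R + r) ^ δ) / Real.log (1 + R - r) ^ 2 *
          ∫ t in Set.Ioi (0 : ℝ), (Real.log (1 + t) / t) ^ 2) := by
  have hI : (∫ t in Set.Ioi (0:ℝ), (Real.log (1 + t) / t) ^ 2) =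
      ∫ t in Set.Ioi (0:ℝ), Gfun t := rfl
  set I : ℝ := ∫ t in Set.Ioi (0:ℝ), Gfun t with hIdef
  have hI0 : 0 ≤ I := setIntegral_nonneg measurableSet_Ioi fun t _ => Gfun_nonneg t
  set L : ℝ := Real.log (1 + R - r) with hLdef
  have hL : 0 < L := Real.log_pos (by linarith)
  set M : ℝ := 1 + Real.log (1 + R + r) ^ δ with hMdef
  have hlogRr : 0 ≤ Real.log (1 + R + r) := Real.log_nonneg (by linarith)
  have hM0 : 0 ≤ M := by
    have : 0 ≤ Real.log (1 + R + r) ^ δ := Real.rpow_nonneg hlogRr δ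
    simp only [hMdef]; linarith
  have hK0 : 0 ≤ M / L ^ 2 := div_nonneg hM0 (by positivity)
  -- the product set
  have hset : {p : ℝ × ℝ | |p.1| < r ∧ r < |p.2| ∧ |p.2| < R} =
      (Set.Ioo (-r) r) ×ˢ (Set.Ioo (-R) (-r) ∪ Set.Ioo r R) := by
    ext p
    simp only [Set.mem_setOf_eq, Set.mem_prod, Set.mem_Ioo, Set.mem_union, abs_lt, lt_abs]
    constructor
    · rintro ⟨hx, hy1, hy2⟩
      exact ⟨hx, by rcases hy1 with h | h
                    · right; exact ⟨h, hy2.2⟩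
                    · left; exact ⟨hy2.1, by linarith⟩⟩
    · rintro ⟨hx, hy⟩
      refine ⟨hx, ?_, ?_⟩
      · rcases hy with ⟨h1, h2⟩ | ⟨h1, h2⟩
        · right; linarith
        · left; exact h1
      · rcases hy with ⟨h1, h2⟩ | ⟨h1, h2⟩
        · constructor <;> linarith
        · constructor <;> linarith
  -- the dominating function
  set g : ℝ × ℝ → ENNReal := fun p => ENNReal.ofReal (M / L ^ 2 * Gfun (|p.2| - r))
    with hgdef
  have hgmeas : Measurable g := by
    apply ENNReal.measurable_ofReal.comp
    exact measurable_const.mul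
      (Gfun_meas.comp ((measurable_snd.abs).sub measurable_const))
  -- pointwise bound
  have hpt : ∀ p ∈ {p : ℝ × ℝ | |p.1| < r ∧ r < |p.2| ∧ |p.2| < R},
      ENNReal.ofReal
        (((phiCut r R p.1 - phiCut r R p.2) / (p.1 - p.2)) ^ 2 *
          (1 + Real.log (1 + |p.1 - p.2|) ^ δ)) ≤ g p := by
    rintro ⟨x, y⟩ ⟨hx, hy1, hy2⟩
    simp only at hx hy1 hy2 ⊢
    apply ENNReal.ofReal_le_ofReal
    have hb : phiCut r R x = 1 := by unfold phiCut; rw [if_pos hx.le]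
    have hc : phiCut r R y = 1 - Real.log (1 + |y| - r) / L := by
      unfold phiCut; rw [if_neg (not_le.2 hy1), if_pos hy2]
    set a : ℝ := Real.log (1 + |y| - r) with hadef
    have ha0 : 0 ≤ a := Real.log_nonneg (by linarith)
    have hu : 0 < |y| - r := by linarith
    have hxy : |y| - r ≤ |x - y| := by
      have h1 : |y| - |x| ≤ |y - x| := abs_sub_abs_le_abs_sub y x
      have h2 : |y - x| = |x - y| := abs_sub_comm y x
      have h3 : (0:ℝ) ≤ |x| := abs_nonneg x
      linarith
    have hxy2 : (|y| - r) ^ 2 ≤ (x - y) ^ 2 := by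
      rw [← sq_abs (x - y)]
      exact pow_le_pow_left₀ hu.le hxy 2
    have habs : 0 ≤ |x - y| := abs_nonneg _
    have hfac : Real.log (1 + |x - y|) ^ δ ≤ Real.log (1 + R + r) ^ δ := by
      apply Real.rpow_le_rpow (Real.log_nonneg (by linarith)) ?_ hδ0.le
      apply Real.log_le_log (by linarith)
      have h1 : |x - y| ≤ |x| + |y| := abs_sub x y
      linarith
    have hfac0 : 0 ≤ Real.log (1 + |x - y|) ^ δ :=
      Real.rpow_nonneg (Real.log_nonneg (by linarith)) δ
    rw [hb, hc]
    have e1 : ((1 - (1 - a / L)) / (x - y)) ^ 2 = a ^ 2 / L ^ 2 / (x - y) ^ 2 := by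
      rw [show (1 - (1 - a / L)) = a / L by ring, div_pow, div_pow]
    rw [e1]
    have hGy : Gfun (|y| - r) = (a / (|y| - r)) ^ 2 := by
      unfold Gfun
      rw [show 1 + (|y| - r) = 1 + |y| - r by ring]
    rw [hGy]
    calc a ^ 2 / L ^ 2 / (x - y) ^ 2 * (1 + Real.log (1 + |x - y|) ^ δ)
        ≤ a ^ 2 / L ^ 2 / (|y| - r) ^ 2 * M := by
          apply mul_le_mul ?_ ?_ (by linarith) ?_
          · apply div_le_div_of_nonneg_left (by positivity) (by positivity) hxy2
          · simp only [hMdef]; linarith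
          · positivity
      _ = M / L ^ 2 * (a / (|y| - r)) ^ 2 := by rw [div_pow]; ring
  have hmeas2 : Measurable fun p : ℝ × ℝ => ENNReal.ofReal (Gfun (|p.2| - r)) :=
    ENNReal.measurable_ofReal.comp
      (Gfun_meas.comp ((measurable_snd.abs).sub measurable_const))
  have hmeas3 : Measurable fun z : ℝ => ENNReal.ofReal (Gfun (z - r)) :=
    ENNReal.measurable_ofReal.comp (Gfun_meas.comp (measurable_id.sub measurable_const))
  -- apply monotonicity
  calc Jint r R δ {p : ℝ × ℝ | |p.1| < r ∧ r < |p.2| ∧ |p.2| < R}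
      ≤ ∫⁻ p in {p : ℝ × ℝ | |p.1| < r ∧ r < |p.2| ∧ |p.2| < R}, g p :=
        setLIntegral_mono hgmeas hpt
    _ = ENNReal.ofReal (M / L ^ 2) *
        ∫⁻ p in (Set.Ioo (-r) r) ×ˢ (Set.Ioo (-R) (-r) ∪ Set.Ioo r R),
          ENNReal.ofReal (Gfun (|p.2| - r)) := by
        rw [hset, ← lintegral_const_mul _ hmeas2]
        apply setLIntegral_congr_fun (measurableSet_Ioo.prod
          (measurableSet_Ioo.union measurableSet_Ioo))
        intro p _
        simp only [hgdef, Function.comp]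
        rw [ENNReal.ofReal_mul hK0]
    _ = ENNReal.ofReal (M / L ^ 2) * (ENNReal.ofReal (2 * r) *
        ∫⁻ y in Set.Ioo (-R) (-r) ∪ Set.Ioo r R, ENNReal.ofReal (Gfun (|y| - r))) := by
        congr 1
        rw [Measure.volume_eq_prod, ← Measure.prod_restrict,
          lintegral_prod _ hmeas2.aemeasurable]
        simp only [lintegral_const, Measure.restrict_apply_univ]
        rw [Real.volume_Ioo, show r - (-r) = 2 * r by ring, mul_comm]
    _ ≤ ENNReal.ofReal (M / L ^ 2) * (ENNReal.ofReal (2 * r) *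
        (ENNReal.ofReal I + ENNReal.ofReal I)) := by
        apply mul_le_mul_right
        apply mul_le_mul_right
        rw [lintegral_union measurableSet_Ioo (by
          rw [Set.disjoint_left]
          rintro y ⟨h1, h2⟩ ⟨h3, h4⟩
          linarith)]
        apply add_le_add
        · -- negative side
          have hcongr : ∫⁻ y in Set.Ioo (-R) (-r), ENNReal.ofReal (Gfun (|y| - r)) =
              ∫⁻ y in Set.Ioo (-R) (-r), (fun z => ENNReal.ofReal (Gfun (z - r))) (-y) := by
            apply setLIntegral_congr_fun measurableSet_Ioo
            intro y hy
            have : |y| = -y := abs_of_neg (by linarith [hy.2])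
            simp only [this]
          rw [hcongr, lint_reflect (fun z => ENNReal.ofReal (Gfun (z - r))) hmeas3 (-R) (-r),
            neg_neg, neg_neg, lint_shift (fun z => ENNReal.ofReal (Gfun z)) r R r,
            sub_self, ← lintegral_Gfun]
          exact lintegral_mono_set Set.Ioo_subset_Ioi_self
        · have hcongr : ∫⁻ y in Set.Ioo r R, ENNReal.ofReal (Gfun (|y| - r)) =
              ∫⁻ y in Set.Ioo r R, (fun z => ENNReal.ofReal (Gfun z)) (y - r) := by
            apply setLIntegral_congr_fun measurableSet_Ioo
            intro y hy
            have : |y| = y := abs_of_pos (by linarith [hy.1])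
            simp only [this]
          rw [hcongr, lint_shift (fun z => ENNReal.ofReal (Gfun z)) r R r,
            sub_self, ← lintegral_Gfun]
          exact lintegral_mono_set Set.Ioo_subset_Ioi_self
    _ = ENNReal.ofReal (4 * r * M / L ^ 2 * I) := by
        rw [← ENNReal.ofReal_add hI0 hI0, ← ENNReal.ofReal_mul (by linarith),
          ← ENNReal.ofReal_mul hK0]
        congr 1
        ring
    _ = ENNReal.ofReal (4 * r * M / L ^ 2 *
          ∫ t in Set.Ioi (0 : ℝ), (Real.log (1 + t) / t) ^ 2) := by rw [hI]


lemma part2_real (r δ I : ℝ) (hr : 0 < r) (hδ0 : 0 < δ) (hδ1 : δ < 1) (hI0 : 0 ≤ I)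
    (R : ℝ) (hR : 2 * r + 9 ≤ R) :
    4 * r * (1 + Real.log (1 + R + r) ^ δ) / Real.log (1 + R - r) ^ 2 * I ≤
      (48 * r * I + 1) / Real.log R ^ (2 - δ) := by
  have h9 : (9:ℝ) ≤ R := by linarith
  have hR0 : (0:ℝ) < R := by linarith
  set v : ℝ := Real.log R with hvdef
  have hv2 : 2 ≤ v := by
    rw [hvdef, Real.le_log_iff_exp_le hR0]
    have h1 : Real.exp 1 < 2.7182818286 := Real.exp_one_lt_d9
    have h2 : Real.exp 2 = Real.exp 1 * Real.exp 1 := by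
      rw [← Real.exp_add]; norm_num
    have h3 : 0 < Real.exp 1 := Real.exp_pos 1
    nlinarith
  have hv0 : (0:ℝ) < v := by linarith
  set L : ℝ := Real.log (1 + R - r) with hLdef
  have hA : v / 2 ≤ L := by
    have hs : Real.sqrt R ≤ 1 + R - r := by
      rw [Real.sqrt_le_iff]
      constructor
      · linarith
      · nlinarith
    have := Real.log_le_log (Real.sqrt_pos.2 hR0) hs
    rw [Real.log_sqrt hR0.le] at this; exact this
  have hL0 : 0 < L := by linarith
  have hB : Real.log (1 + R + r) ≤ 2 * v := by
    have h1 : 1 + R + r ≤ R ^ 2 := by nlinarith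
    have h2 := Real.log_le_log (by linarith) h1
    rw [Real.log_pow, Nat.cast_ofNat] at h2; exact h2
  have hlog0 : 0 ≤ Real.log (1 + R + r) := Real.log_nonneg (by linarith)
  have hvd1 : 1 ≤ v ^ δ := Real.one_le_rpow (by linarith) hδ0.le
  have hvd0 : 0 ≤ v ^ δ := by linarith
  have hM : 1 + Real.log (1 + R + r) ^ δ ≤ 3 * v ^ δ := by
    have h1 : Real.log (1 + R + r) ^ δ ≤ (2 * v) ^ δ :=
      Real.rpow_le_rpow hlog0 hB hδ0.le
    have h2 : (2 * v) ^ δ = 2 ^ δ * v ^ δ := Real.mul_rpow (by norm_num) hv0.le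
    have h3 : (2:ℝ) ^ δ ≤ 2 := by
      calc (2:ℝ) ^ δ ≤ 2 ^ (1:ℝ) := Real.rpow_le_rpow_of_exponent_le one_le_two hδ1.le
      _ = 2 := Real.rpow_one 2
    nlinarith
  have hL2 : v ^ 2 / 4 ≤ L ^ 2 := by nlinarith
  have step1 : 4 * r * (1 + Real.log (1 + R + r) ^ δ) / L ^ 2 ≤
      4 * r * (3 * v ^ δ) / (v ^ 2 / 4) := by
    apply div_le_div₀ (by positivity) (by nlinarith) (by nlinarith) hL2
  have hvpow : 0 < v ^ (2 - δ) := Real.rpow_pos_of_pos hv0 _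
  have step3 : v ^ δ / v ^ 2 = (v ^ (2 - δ))⁻¹ := by
    rw [show v ^ (2:ℕ) = v ^ ((2:ℕ):ℝ) from (Real.rpow_natCast v 2).symm,
      ← Real.rpow_sub hv0, show δ - (2:ℕ) = -(2-δ) by push_cast; ring,
      Real.rpow_neg hv0.le]
  calc 4 * r * (1 + Real.log (1 + R + r) ^ δ) / L ^ 2 * I
      ≤ 4 * r * (3 * v ^ δ) / (v ^ 2 / 4) * I := mul_le_mul_of_nonneg_right step1 hI0
    _ = 48 * r * I * (v ^ δ / v ^ 2) := by ring
    _ = 48 * r * I * (v ^ (2 - δ))⁻¹ := by rw [step3]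
    _ ≤ (48 * r * I + 1) * (v ^ (2 - δ))⁻¹ := by
        apply mul_le_mul_of_nonneg_right (by linarith) (by positivity)
    _ = (48 * r * I + 1) / v ^ (2 - δ) := by rw [div_eq_mul_inv]

theorem stmt16 (r δ : ℝ) (hr : 0 < r) (hδ : δ ∈ Set.Ioo (0 : ℝ) 1) :
    (∀ R > r,
        Jint r R δ {p : ℝ × ℝ | |p.1| < r ∧ r < |p.2| ∧ |p.2| < R} ≤
          ENNReal.ofReal
            (4 * r * (1 + Real.log (1 + R + r) ^ δ) / Real.log (1 + R - r) ^ 2 *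
              ∫ t in Set.Ioi (0 : ℝ), (Real.log (1 + t) / t) ^ 2)) ∧
      (∃ C > (0 : ℝ), ∃ R₀ > r, ∀ R ≥ R₀,
        Jint r R δ {p : ℝ × ℝ | |p.1| < r ∧ r < |p.2| ∧ |p.2| < R} ≤
          ENNReal.ofReal (C / Real.log R ^ (2 - δ))) ∧
      Filter.Tendsto
        (fun R : ℝ => Jint r R δ {p : ℝ × ℝ | |p.1| < r ∧ r < |p.2| ∧ |p.2| < R})
        Filter.atTop (nhds 0) := by
  obtain ⟨hδ0, hδ1⟩ := hδ
  set I : ℝ := ∫ t in Set.Ioi (0:ℝ), (Real.log (1 + t) / t) ^ 2 with hIdef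
  have hI0 : 0 ≤ I := setIntegral_nonneg measurableSet_Ioi fun t _ => sq_nonneg _
  have part2 : ∀ R ≥ 2 * r + 9,
      Jint r R δ {p : ℝ × ℝ | |p.1| < r ∧ r < |p.2| ∧ |p.2| < R} ≤
        ENNReal.ofReal ((48 * r * I + 1) / Real.log R ^ (2 - δ)) := by
    intro R hR
    calc Jint r R δ {p : ℝ × ℝ | |p.1| < r ∧ r < |p.2| ∧ |p.2| < R}
        ≤ ENNReal.ofReal
            (4 * r * (1 + Real.log (1 + R + r) ^ δ) / Real.log (1 + R - r) ^ 2 * I) :=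
          main_bound r δ hr hδ0 R (by linarith)
      _ ≤ ENNReal.ofReal ((48 * r * I + 1) / Real.log R ^ (2 - δ)) :=
          ENNReal.ofReal_le_ofReal (part2_real r δ I hr hδ0 hδ1 hI0 R hR)
  refine ⟨fun R hR => main_bound r δ hr hδ0 R hR, ⟨48 * r * I + 1, by positivity,
    2 * r + 9, by linarith, part2⟩, ?_⟩
  have htop : Filter.Tendsto (fun R : ℝ => Real.log R ^ (2 - δ)) Filter.atTop
      Filter.atTop :=
    (tendsto_rpow_atTop (by linarith : (0:ℝ) < 2 - δ)).comp Real.tendsto_log_atTop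
  have t1 : Filter.Tendsto (fun R : ℝ => (48 * r * I + 1) / Real.log R ^ (2 - δ))
      Filter.atTop (nhds 0) := tendsto_const_nhds.div_atTop htop
  have t2 : Filter.Tendsto
      (fun R : ℝ => ENNReal.ofReal ((48 * r * I + 1) / Real.log R ^ (2 - δ)))
      Filter.atTop (nhds 0) := by
    have := ENNReal.tendsto_ofReal t1
    simpa using this
  apply tendsto_of_tendsto_of_tendsto_of_le_of_le' tendsto_const_nhds t2
  · filter_upwards with R using zero_le
  · filter_upwards [Filter.eventually_ge_atTop (2 * r + 9)] with R hR using part2 R hR
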